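/- Let f(z) = Σ_{α∈A} c_α z^α be a convenient and nondegenerate Laurent polynomial on (ℂ*)ⁿ. Let β ∈ ℂⁿ with Re β ≠ 0, and let M = {α ∈ A : ⟨α, Re β⟩ = max_{α'∈A} ⟨α', Re β⟩} be the set of exponents on which the linear functional ⟨·, Re β⟩ attains its maximum over A. Then for every θ ∈ ℝ, Σ_{i=1}^n |Σ_{α∈M} c_α·αᵢ·e^{i·Im(Σ_j α_j β_j)·θ}| > 0; equivalently, there exists an index i such that Σ_{α∈M} c_α·αᵢ·e^{i·Im(⟨α,β⟩)·θ} ≠ 0. -/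

import Mathlib

open Finset
open scoped Classical

/-- **The key nonvanishing claim for convenient nondegenerate Laurent polynomials.**
Let `f(z) = Σ_{α∈A} c_α z^α` be convenient and nondegenerate, let `β ∈ ℂⁿ` with
`Re β ≠ 0`, and let `M ⊆ A` be the set of exponents maximizing `⟨·, Re β⟩` on `A`.
Then for every `θ ∈ ℝ`,
`Σᵢ |Σ_{α∈M} c_α·αᵢ·e^{i·Im⟨α,β⟩·θ}| > 0`. -/
theorem laurent_nonvanishing_claim
    (n : ℕ) (hn : 1 ≤ n) (A : Finset (Fin n → ℤ)) (hA : A.Nonempty)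
    (c : (Fin n → ℤ) → ℂ) (hc : ∀ α ∈ A, c α ≠ 0)
    -- `f` is convenient
    (hconv : (0 : Fin n → ℝ) ∈
      interior (convexHull ℝ ((fun (α : Fin n → ℤ) (i : Fin n) => (α i : ℝ)) '' A)))
    -- `f` is nondegenerate
    (hnd : ∀ F : Set (Fin n → ℝ),
      IsExposed ℝ (convexHull ℝ ((fun (α : Fin n → ℤ) (i : Fin n) => (α i : ℝ)) '' A)) F →
      0 < Module.finrank ℝ (vectorSpan ℝ F) →
      ¬ ∃ z : Fin n → ℂ, (∀ i, z i ≠ 0) ∧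
        (∑ α ∈ A.filter (fun α => (fun i => (α i : ℝ)) ∈ F),
            c α * ∏ i, z i ^ (α i)) = 0 ∧
        ∀ j, (∑ α ∈ A.filter (fun α => (fun i => (α i : ℝ)) ∈ F),
            c α * (α j : ℂ) * ∏ i, z i ^ (α i)) = 0)
    (β : Fin n → ℂ) (hβ : (fun j => (β j).re) ≠ (0 : Fin n → ℝ)) :
    ∀ θ : ℝ,
      0 < ∑ i, ‖
        (∑ α ∈ A.filter (fun α => ∀ α' ∈ A,
            (∑ j, (α' j : ℝ) * (β j).re) ≤ ∑ j, (α j : ℝ) * (β j).re),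
          c α * (α i : ℂ) *
            Complex.exp (Complex.I * (((∑ j, (α j : ℂ) * β j).im : ℝ) : ℂ) * (θ : ℂ)))‖ := by
  intro θ
  classical
  by_contra hpos
  push_neg at hpos
  have h0 := le_antisymm hpos (Finset.sum_nonneg fun i _ => norm_nonneg _)
  rw [Finset.sum_eq_zero_iff_of_nonneg (fun i _ => norm_nonneg _)] at h0
  have hzero : ∀ i : Fin n, (∑ α ∈ A.filter (fun α => ∀ α' ∈ A,
        (∑ j, (α' j : ℝ) * (β j).re) ≤ ∑ j, (α j : ℝ) * (β j).re),
      c α * (α i : ℂ) *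
        Complex.exp (Complex.I * (((∑ j, (α j : ℂ) * β j).im : ℝ) : ℂ) * (θ : ℂ))) = 0 :=
    fun i => norm_eq_zero.1 (h0 i (Finset.mem_univ i))
  clear hpos h0
  -- setup
  set S : Set (Fin n → ℝ) := (fun (α : Fin n → ℤ) (i : Fin n) => (α i : ℝ)) '' ↑A with hS
  set C : Set (Fin n → ℝ) := convexHull ℝ S with hC
  set L : (Fin n → ℝ) → ℝ := fun x => ∑ j, x j * (β j).re with hLdef
  have hLlin : IsLinearMap ℝ L := by
    constructor
    · intro x y
      simp only [hLdef, Pi.add_apply, add_mul, Finset.sum_add_distrib]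
    · intro a x
      simp only [hLdef, Pi.smul_apply, smul_eq_mul, mul_assoc, Finset.mul_sum]
  obtain ⟨α₀, hα₀A, hα₀max⟩ := A.exists_max_image (fun α => L (fun i => (α i : ℝ))) hA
  set m : ℝ := L (fun i => (α₀ i : ℝ)) with hmdef
  have hCle : ∀ x ∈ C, L x ≤ m := by
    intro x hx
    have hsub : S ⊆ {w | L w ≤ m} := by
      rintro w ⟨α, hαA, rfl⟩
      exact hα₀max α hαA
    exact convexHull_min hsub (convex_halfSpace_le hLlin m) hx
  set F : Set (Fin n → ℝ) := {x ∈ C | ∀ y ∈ C, L y ≤ L x} with hF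
  have hα₀C : (fun i => (α₀ i : ℝ)) ∈ C := subset_convexHull ℝ S ⟨α₀, hα₀A, rfl⟩
  have hα₀F : (fun i => (α₀ i : ℝ)) ∈ F := ⟨hα₀C, fun y hy => hCle y hy⟩
  have hexp : IsExposed ℝ C F := by
    intro _
    refine ⟨LinearMap.toContinuousLinearMap (IsLinearMap.mk' L hLlin), ?_⟩
    rw [hF]
    ext x
    simp [LinearMap.coe_toContinuousLinearMap']
  have hmemF : ∀ α ∈ A, ((fun i => (α i : ℝ)) ∈ F ↔ ∀ α' ∈ A,
      (∑ j, (α' j : ℝ) * (β j).re) ≤ ∑ j, (α j : ℝ) * (β j).re) := by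
    intro α hαA
    constructor
    · intro hF' α' hα'A
      exact hF'.2 _ (subset_convexHull ℝ S ⟨α', hα'A, rfl⟩)
    · intro hmax
      refine ⟨subset_convexHull ℝ S ⟨α, hαA, rfl⟩, fun y hy => ?_⟩
      exact (hCle y hy).trans (hmax α₀ hα₀A)
  have hfilter : A.filter (fun α => ∀ α' ∈ A,
        (∑ j, (α' j : ℝ) * (β j).re) ≤ ∑ j, (α j : ℝ) * (β j).re)
      = A.filter (fun α => (fun i => (α i : ℝ)) ∈ F) :=
    Finset.filter_congr (fun α hα => (hmemF α hα).symm)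
  set M : Finset (Fin n → ℤ) := A.filter (fun α => (fun i => (α i : ℝ)) ∈ F) with hM
  -- m is positive
  have hm : 0 < m := by
    have hcont : Continuous (fun t : ℝ => t • (fun j => (β j).re)) := by
      exact continuous_id.smul continuous_const
    have hpre : (fun t : ℝ => t • (fun j => (β j).re)) ⁻¹' interior C ∈ nhds (0 : ℝ) := by
      apply hcont.continuousAt.preimage_mem_nhds
      rw [show ((0:ℝ) • (fun j => (β j).re)) = (0 : Fin n → ℝ) by simp]
      exact isOpen_interior.mem_nhds hconv
    obtain ⟨δ, hδ, hball⟩ := Metric.mem_nhds_iff.1 hpre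
    have hmem : (δ/2) • (fun j => (β j).re) ∈ C := by
      have : (δ/2 : ℝ) ∈ Metric.ball (0:ℝ) δ := by
        rw [Metric.mem_ball, Real.dist_eq, sub_zero, abs_of_pos (half_pos hδ)]
        linarith
      exact interior_subset (hball this)
    have hLx : L ((δ/2) • (fun j => (β j).re)) = (δ/2) * ∑ j, (β j).re ^ 2 := by
      simp only [hLdef, Pi.smul_apply, smul_eq_mul, Finset.mul_sum]
      exact Finset.sum_congr rfl fun j _ => by ring
    have hsum : 0 < ∑ j, (β j).re ^ 2 := by
      obtain ⟨j₀, hj₀⟩ : ∃ j, (β j).re ≠ 0 := by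
        by_contra h; push_neg at h; exact hβ (funext h)
      exact Finset.sum_pos' (fun j _ => sq_nonneg _) ⟨j₀, Finset.mem_univ _, by positivity⟩
    have := hCle _ hmem
    rw [hLx] at this
    have : 0 < (δ/2) * ∑ j, (β j).re ^ 2 := by positivity
    linarith [hCle _ hmem, hLx ▸ hCle _ hmem]
  -- the torus point
  set z : Fin n → ℂ := fun j => Complex.exp (Complex.I * ((β j).im : ℂ) * (θ : ℂ)) with hz
  have hzne : ∀ i, z i ≠ 0 := fun i => Complex.exp_ne_zero _
  have hprod : ∀ α : Fin n → ℤ,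
      (∏ i, z i ^ (α i)) = Complex.exp (Complex.I * (((∑ j, (α j : ℂ) * β j).im : ℝ) : ℂ) * (θ : ℂ)) := by
    intro α
    have h1 : ∀ i, z i ^ (α i) = Complex.exp ((α i : ℂ) * (Complex.I * ((β i).im : ℂ) * (θ : ℂ))) :=
      fun i => (Complex.exp_int_mul _ _).symm
    rw [Finset.prod_congr rfl (fun i _ => h1 i), ← Complex.exp_sum]
    congr 1
    have him : ((∑ j, (α j : ℂ) * β j).im : ℝ) = ∑ j, (α j : ℝ) * (β j).im := by
      rw [Complex.im_sum]
      exact Finset.sum_congr rfl (fun j _ => by simp)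
    rw [him]
    push_cast
    rw [Finset.mul_sum, Finset.sum_mul]
    exact Finset.sum_congr rfl fun j _ => by ring
  -- the logarithmic partials vanish at z
  have hzero' : ∀ j, (∑ α ∈ M, c α * (α j : ℂ) * ∏ i, z i ^ (α i)) = 0 := by
    intro j
    have h := hzero j
    rw [hfilter] at h
    rw [← h]
    exact Finset.sum_congr rfl fun α _ => by rw [hprod α]
  -- L equals m on M
  have hmF : ∀ α ∈ M, (∑ j, (α j : ℝ) * (β j).re) = m := by
    intro α hα
    rw [hM, Finset.mem_filter] at hα
    exact le_antisymm (hCle _ hα.2.1) (hα.2.2 _ hα₀C)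
  -- f itself vanishes at z (Euler relation)
  have hf0 : (∑ α ∈ M, c α * ∏ i, z i ^ (α i)) = 0 := by
    have key : ∀ α ∈ M,
        (∑ j, ((β j).re : ℂ) * (c α * (α j : ℂ) * ∏ i, z i ^ (α i)))
          = (m : ℂ) * (c α * ∏ i, z i ^ (α i)) := by
      intro α hα
      have h1 : (∑ j, ((β j).re : ℂ) * (c α * (α j : ℂ) * ∏ i, z i ^ (α i)))
          = (((∑ j, (α j : ℝ) * (β j).re : ℝ)) : ℂ) * (c α * ∏ i, z i ^ (α i)) := by
        push_cast
        rw [Finset.sum_mul]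
        exact Finset.sum_congr rfl fun j _ => by ring
      rw [h1, hmF α hα]
    have h3 : (0 : ℂ) = ∑ j, ((β j).re : ℂ) * (∑ α ∈ M, c α * (α j : ℂ) * ∏ i, z i ^ (α i)) := by
      simp only [hzero', mul_zero, Finset.sum_const_zero]
    have h4 : (∑ j, ((β j).re : ℂ) * (∑ α ∈ M, c α * (α j : ℂ) * ∏ i, z i ^ (α i)))
        = ∑ α ∈ M, (m : ℂ) * (c α * ∏ i, z i ^ (α i)) := by
      calc (∑ j, ((β j).re : ℂ) * (∑ α ∈ M, c α * (α j : ℂ) * ∏ i, z i ^ (α i)))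
          = ∑ j, ∑ α ∈ M, ((β j).re : ℂ) * (c α * (α j : ℂ) * ∏ i, z i ^ (α i)) :=
            Finset.sum_congr rfl fun j _ => Finset.mul_sum _ _ _
        _ = ∑ α ∈ M, ∑ j, ((β j).re : ℂ) * (c α * (α j : ℂ) * ∏ i, z i ^ (α i)) :=
            Finset.sum_comm
        _ = ∑ α ∈ M, (m : ℂ) * (c α * ∏ i, z i ^ (α i)) := Finset.sum_congr rfl key
    have h5 : (m : ℂ) * (∑ α ∈ M, c α * ∏ i, z i ^ (α i)) = 0 := by
      rw [Finset.mul_sum, ← h4, ← h3]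
    have hmne : (m : ℂ) ≠ 0 := by exact_mod_cast hm.ne'
    exact (mul_eq_zero.1 h5).resolve_left hmne
  -- case split on the dimension of the face
  rcases Nat.eq_zero_or_pos (Module.finrank ℝ (vectorSpan ℝ F)) with hr | hr
  · have hbot : vectorSpan ℝ F = ⊥ := Submodule.finrank_eq_zero.1 hr
    have hsub : ∀ x ∈ F, ∀ y ∈ F, x = y := by
      intro x hx y hy
      have hmem : x -ᵥ y ∈ vectorSpan ℝ F := vsub_mem_vectorSpan ℝ hx hy
      rw [hbot, Submodule.mem_bot] at hmem
      exact sub_eq_zero.1 hmem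
    have hMsub : ∀ α ∈ M, α = α₀ := by
      intro α hα
      rw [hM, Finset.mem_filter] at hα
      have hcasteq : (fun i => (α i : ℝ)) = (fun i => (α₀ i : ℝ)) := hsub _ hα.2 _ hα₀F
      funext i
      exact_mod_cast congrFun hcasteq i
    have hα₀M : α₀ ∈ M := by rw [hM, Finset.mem_filter]; exact ⟨hα₀A, hα₀F⟩
    have hMeq : M = {α₀} := Finset.eq_singleton_iff_unique_mem.2 ⟨hα₀M, hMsub⟩
    have hα₀zero : ∀ j, (α₀ j : ℂ) = 0 := by
      intro j
      have h := hzero' j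
      rw [hMeq, Finset.sum_singleton] at h
      have hP : (∏ i, z i ^ (α₀ i)) ≠ 0 :=
        Finset.prod_ne_zero_iff.2 fun i _ => zpow_ne_zero _ (hzne i)
      rcases mul_eq_zero.1 h with h' | h'
      · rcases mul_eq_zero.1 h' with h'' | h''
        · exact absurd h'' (hc α₀ hα₀A)
        · exact h''
      · exact absurd h' hP
    have hm0 : m = 0 := by
      have hr0 : ∀ j, (α₀ j : ℝ) = 0 := fun j => by exact_mod_cast hα₀zero j
      show (∑ j, (α₀ j : ℝ) * (β j).re) = 0
      simp [hr0]
    exact absurd hm0 hm.ne'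
  · have hMM : @Finset.filter _ (fun α => (fun i => (α i : ℝ)) ∈ F)
        (fun a => Classical.propDecidable _) A = M := by
      rw [hM]; exact Finset.filter_congr_decidable _ _ _
    refine hnd F hexp hr ⟨z, hzne, ?_, ?_⟩
    · rw [hMM]; exact hf0
    · intro j; rw [hMM]; exact hzero' j
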